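/- The Bilateral Grand Lebesgue norm has the Fatou property: if (f_n) is a nondecreasing sequence of non-negative measurable functions on X converging pointwise to f, with sup_n ‖f_n‖_{G(ψ)} < ∞, then ‖f_n‖_{G(ψ)} converges, increasing, to ‖f‖_{G(ψ)}. -/

import Mathlib

noncomputable section

open MeasureTheory Filter Set Topology
open scoped ENNReal NNReal

/-- The set of exponents `p` with `a < p < b` (where `b : ℝ≥0∞` may be `∞`). -/
def expSet (a : ℝ) (b : ℝ≥0∞) : Set ℝ := {p : ℝ | a < p ∧ ENNReal.ofReal p < b}

/-- The filter of real exponents `p` tending to `b` from below (`p → b⁻`);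
when `b = ∞` this amounts to `p → ∞`. -/
def atBbelow (b : ℝ≥0∞) : Filter ℝ :=
  Filter.comap ENNReal.ofReal (nhdsWithin b (Set.Iio b))

/-- The class `EΨ(a,b)`: continuous `ψ` on `(a,b)` with `ψ(p) ≥ 1` and `ψ(b-0) = ∞`. -/
def IsEPsi (a : ℝ) (b : ℝ≥0∞) (ψ : ℝ → ℝ) : Prop :=
  ContinuousOn ψ (expSet a b) ∧ (∀ p ∈ expSet a b, 1 ≤ ψ p) ∧
    Filter.Tendsto ψ (atBbelow b) Filter.atTop

/-- Norm of the Bilateral Grand Lebesgue space `G(ψ; a, b)` over a measure `μ`: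
`‖f‖_{G(ψ)} = sup_{p ∈ (a,b)} ‖f‖_{L^p(μ)} / ψ(p)`, with values in `ℝ≥0∞`. -/
def GNorm {α : Type*} [MeasurableSpace α] (μ : Measure α) (a : ℝ) (b : ℝ≥0∞)
    (ψ : ℝ → ℝ) (f : α → ℝ) : ℝ≥0∞ :=
  ⨆ p ∈ expSet a b, eLpNorm f (ENNReal.ofReal p) μ / ENNReal.ofReal (ψ p)

/-- The class `Ψ(a,b)` (relative to a measure `μ`): positive continuous `ψ` on `(a,b)`
with `ψ(b-0) = ∞`, admitting a representation `ψ(p) = ‖f‖_{L^p(μ)}` for `p ∈ (a,b)`, where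
the measurable `f` lies in `L^p(μ)` for all `p ∈ (a,b)`. -/
def IsPsi {α : Type*} [MeasurableSpace α] (μ : Measure α) (a : ℝ) (b : ℝ≥0∞)
    (ψ : ℝ → ℝ) : Prop :=
  ContinuousOn ψ (expSet a b) ∧ (∀ p ∈ expSet a b, 0 < ψ p) ∧
    Filter.Tendsto ψ (atBbelow b) Filter.atTop ∧
    ∃ f : α → ℝ, AEStronglyMeasurable f μ ∧
      ∀ p ∈ expSet a b, eLpNorm f (ENNReal.ofReal p) μ = ENNReal.ofReal (ψ p)

/-- The fundamental function `φ(G(ψ;a,b), s) = sup_{p ∈ (a,b)} s^{1/p}/ψ(p)`, real-valued. -/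
def fundR (a : ℝ) (b : ℝ≥0∞) (ψ : ℝ → ℝ) (s : ℝ) : ℝ :=
  ⨆ p : expSet a b, s ^ (1 / (p : ℝ)) / ψ p

/-- The fundamental function `φ(G(ψ;a,b), δ) = sup_{p ∈ (a,b)} δ^{1/p}/ψ(p)`, `ℝ≥0∞`-valued. -/
def fundE (a : ℝ) (b : ℝ≥0∞) (ψ : ℝ → ℝ) (δ : ℝ≥0∞) : ℝ≥0∞ :=
  ⨆ p ∈ expSet a b, δ ^ (1 / p) / ENNReal.ofReal (ψ p)


lemma eLpNorm_iSup_aux {α : Type*} [MeasurableSpace α] (μ : Measure α)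
    (p : ℝ) (hp : 0 < p)
    (f : ℕ → α → ℝ) (F : α → ℝ)
    (hmeas : ∀ n, Measurable (f n))
    (hnonneg : ∀ n x, 0 ≤ f n x)
    (hmono : ∀ x, Monotone fun n => f n x)
    (hlim : ∀ x, Tendsto (fun n => f n x) atTop (𝓝 (F x))) :
    eLpNorm F (ENNReal.ofReal p) μ = ⨆ n, eLpNorm (f n) (ENNReal.ofReal p) μ := by
  have hp0 : ENNReal.ofReal p ≠ 0 := by simp [ENNReal.ofReal_eq_zero, not_le, hp]
  have hptop : ENNReal.ofReal p ≠ ∞ := ENNReal.ofReal_ne_top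
  have htr : (ENNReal.ofReal p).toReal = p := ENNReal.toReal_ofReal hp.le
  simp only [eLpNorm_eq_lintegral_rpow_enorm_toReal hp0 hptop, htr, enorm_eq_nnnorm]
  have hpt : ∀ x, ((‖F x‖₊ : ℝ≥0∞)) ^ p = ⨆ n, ((‖f n x‖₊ : ℝ≥0∞)) ^ p := by
    intro x
    have hmono' : Monotone fun n => ((‖f n x‖₊ : ℝ≥0∞)) ^ p := by
      intro m n hmn
      apply ENNReal.rpow_le_rpow _ hp.le
      simp only [ENNReal.coe_le_coe, ← NNReal.coe_le_coe, coe_nnnorm,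
        Real.norm_of_nonneg (hnonneg _ x)]
      exact hmono x hmn
    have htend : Tendsto (fun n => ((‖f n x‖₊ : ℝ≥0∞)) ^ p) atTop
        (𝓝 (((‖F x‖₊ : ℝ≥0∞)) ^ p)) := by
      apply (ENNReal.continuous_rpow_const.tendsto _).comp
      exact (ENNReal.continuous_coe.tendsto _).comp
        ((continuous_nnnorm.tendsto _).comp (hlim x))
    exact tendsto_nhds_unique htend (tendsto_atTop_iSup hmono')
  have hmeasg : ∀ n, Measurable fun x => ((‖f n x‖₊ : ℝ≥0∞)) ^ p := fun n =>
    ((hmeas n).nnnorm.coe_nnreal_ennreal).pow_const _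
  have hmonog : Monotone fun n => fun x => ((‖f n x‖₊ : ℝ≥0∞)) ^ p := by
    intro m n hmn x
    apply ENNReal.rpow_le_rpow _ hp.le
    simp only [ENNReal.coe_le_coe, ← NNReal.coe_le_coe, coe_nnnorm,
      Real.norm_of_nonneg (hnonneg _ x)]
    exact hmono x hmn
  have hint : (∫⁻ x, ((‖F x‖₊ : ℝ≥0∞)) ^ p ∂μ)
      = ⨆ n, ∫⁻ x, ((‖f n x‖₊ : ℝ≥0∞)) ^ p ∂μ := by
    rw [← lintegral_iSup hmeasg hmonog]
    exact lintegral_congr fun x => hpt x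
  rw [hint]
  exact Monotone.map_iSup_of_continuousAt (f := fun u : ℝ≥0∞ => u ^ (1 / p))
    ENNReal.continuous_rpow_const.continuousAt
    (fun u v huv => ENNReal.rpow_le_rpow huv (by positivity))
    (ENNReal.zero_rpow_of_pos (by positivity))

/-- **Fatou property of the BGL norm.** If `(f n)` is a nondecreasing sequence of
non-negative measurable functions on a σ-finite measure space converging pointwise to `F`, with
`sup_n ‖f n‖_{G(ψ)} < ∞`, then `‖f n‖_{G(ψ)}` converges, increasing, to `‖F‖_{G(ψ)}`. -/
theorem fatou_property_GNorm {α : Type*} [MeasurableSpace α] (μ : Measure α) [SigmaFinite μ]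
    (a : ℝ) (b : ℝ≥0∞) (ha : 1 ≤ a) (hab : ENNReal.ofReal a < b)
    (ψ : ℝ → ℝ) (hψ : IsEPsi a b ψ)
    (f : ℕ → α → ℝ) (F : α → ℝ)
    (hmeas : ∀ n, Measurable (f n))
    (hnonneg : ∀ n x, 0 ≤ f n x)
    (hmono : ∀ x, Monotone fun n => f n x)
    (hlim : ∀ x, Tendsto (fun n => f n x) atTop (𝓝 (F x)))
    (hbdd : (⨆ n, GNorm μ a b ψ (f n)) < ⊤) :
    (Monotone fun n => GNorm μ a b ψ (f n)) ∧
      Tendsto (fun n => GNorm μ a b ψ (f n)) atTop (𝓝 (GNorm μ a b ψ F)) := by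
  have hMon : Monotone fun n => GNorm μ a b ψ (f n) := by
    intro m n hmn
    refine iSup_mono fun p => iSup_mono fun hp => ?_
    refine ENNReal.div_le_div_right ?_ _
    refine eLpNorm_mono fun x => ?_
    rw [Real.norm_of_nonneg (hnonneg m x), Real.norm_of_nonneg (hnonneg n x)]
    exact hmono x hmn
  refine ⟨hMon, ?_⟩
  have hkey : GNorm μ a b ψ F = ⨆ n, GNorm μ a b ψ (f n) := by
    unfold GNorm
    rw [iSup_comm]
    refine iSup_congr fun p => ?_
    rw [iSup_comm]
    refine iSup_congr fun hp => ?_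
    have hppos : 0 < p := by have := hp.1; linarith
    rw [eLpNorm_iSup_aux μ p hppos f F hmeas hnonneg hmono hlim, ENNReal.iSup_div]
  rw [hkey]
  exact tendsto_atTop_iSup hMon
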